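/- arXiv:1804.05227 — 2 statements merged into one kernel-verified Lean document; each statement's English description precedes it below -/
import Mathlib

section
/- Let f, g : ℝ → ℝ be bounded measurable with i[f(P), g(Q)] a positive operator. Let I ⊆ ℝ be an open interval containing the closure of the essential range of f (the essential range being the set of c ∈ ℝ such that f⁻¹(U) has positive Lebesgue measure for every neighborhood U of c). Let Φ : I → ℝ be continuous and operator monotone on I in the following sense: for all bounded self-adjoint operators A, B on L²(ℝ) with spectra contained in I and with B − A positive, the operator Φ(B) − Φ(A) is positive, where Φ(A), Φ(B) are defined by the continuous functional calculus. Then i[(Φ∘f)(P), g(Q)] is a positive operator. -/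
open MeasureTheory Complex Real Filter Set
open scoped ComplexOrder

noncomputable section

abbrev L2 : Type := MeasureTheory.Lp ℂ 2 (MeasureTheory.volume : MeasureTheory.Measure ℝ)

/-- `U` is the Fourier–Plancherel transform: the unitary on `L²(ℝ)` that agrees with the
Fourier integral `ξ ↦ (2π)^{-1/2} ∫ e^{-iξx} φ(x) dx` on integrable functions. -/
def IsFourierPlancherel (U : L2 ≃ₗᵢ[ℂ] L2) : Prop :=
  ∀ φ : L2, MeasureTheory.Integrable (φ : ℝ → ℂ) MeasureTheory.volume →
    (U φ : ℝ → ℂ) =ᵐ[MeasureTheory.volume]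
      fun ξ : ℝ => (Real.sqrt (2 * Real.pi) : ℂ)⁻¹ *
        ∫ x : ℝ, Complex.exp (-(Complex.I * ξ * x)) * (φ : ℝ → ℂ) x

/-- `T` is the operator of multiplication by (the complexification of) `h` on `L²(ℝ)`. -/
def IsMulOp (h : ℝ → ℝ) (T : L2 →L[ℂ] L2) : Prop :=
  ∀ ψ : L2, (T ψ : ℝ → ℂ) =ᵐ[MeasureTheory.volume]
    fun x => (h x : ℂ) * (ψ : ℝ → ℂ) x

/-- Conjugation by the Fourier transform: `Mf ↦ U⁻¹ ∘ Mf ∘ U`; if `Mf = M_f` this is `f(P)`. -/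
def conjF (U : L2 ≃ₗᵢ[ℂ] L2) (T : L2 →L[ℂ] L2) : L2 →L[ℂ] L2 :=
  ((U.symm.toLinearIsometry.toContinuousLinearMap).comp T).comp
    U.toLinearIsometry.toContinuousLinearMap

/-- The commutator `i[f(P), g(Q)] = i (f(P) g(Q) - g(Q) f(P))`, where `f(P) = U⁻¹ Mf U`. -/
def commOp (U : L2 ≃ₗᵢ[ℂ] L2) (Mf Mg : L2 →L[ℂ] L2) : L2 →L[ℂ] L2 :=
  Complex.I • ((conjF U Mf).comp Mg - Mg.comp (conjF U Mf))

/-- A bounded operator is positive if `⟨ψ, Cψ⟩ ≥ 0` for all `ψ`. -/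
def IsPosOp (C : L2 →L[ℂ] L2) : Prop :=
  ∀ ψ : L2, 0 ≤ (inner ℂ ψ (C ψ) : ℂ)

/-- The Kato class `K_a`. -/
def KatoClass (a : ℝ) (f : ℝ → ℝ) : Prop :=
  ∃ F : ℂ → ℂ,
    DifferentiableOn ℂ F {z : ℂ | |z.im| < a} ∧
    (∃ M : ℝ, ∀ z ∈ {z : ℂ | |z.im| < a}, ‖F z‖ ≤ M) ∧
    (∀ᵐ x : ℝ, F (x : ℂ) = (f x : ℂ)) ∧
    (∀ z ∈ {z : ℂ | |z.im| < a}, 0 ≤ (F z).im * z.im)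

/-- The Lebesgue–Stieltjes measure of a bounded monotone right-continuous function
(junk value `0` otherwise). -/
def lsMeasure (f : ℝ → ℝ) : MeasureTheory.Measure ℝ := by
  classical
  exact if h : Monotone f ∧ ∀ x, ContinuousWithinAt f (Set.Ici x) x then
    StieltjesFunction.measure ⟨f, h.1, h.2⟩ else 0

/-- The Fourier–Stieltjes transform `F_f(u) = (2π)^{-1/2} ∫ e^{-iut} dμ_f(t)`. -/
def FST (f : ℝ → ℝ) (u : ℝ) : ℂ :=
  (Real.sqrt (2 * Real.pi) : ℂ)⁻¹ *
    ∫ t : ℝ, Complex.exp (-(Complex.I * u * t)) ∂(lsMeasure f)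


set_option synthInstance.maxHeartbeats 1000000

instance instCFCsa : ContinuousFunctionalCalculus ℝ (L2 →L[ℂ] L2) IsSelfAdjoint :=
  IsSelfAdjoint.instContinuousFunctionalCalculus

open scoped ContinuousFunctionalCalculus

namespace Aux

/-- membership of a product in L2 -/
lemma memLp_mul {h : ℝ → ℂ} (hm : AEStronglyMeasurable h volume) {C : ℝ}
    (hC : ∀ᵐ x : ℝ, ‖h x‖ ≤ C) (ψ : L2) :
    MemLp (fun x => h x * (ψ : ℝ → ℂ) x) 2 volume := by
  have hψ : MemLp (ψ : ℝ → ℂ) 2 volume := Lp.memLp ψ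
  have h2 : MemLp (fun x => (C : ℂ) * (ψ : ℝ → ℂ) x) 2 volume := hψ.const_mul _
  refine h2.of_le (hm.mul (Lp.aestronglyMeasurable ψ)) ?_
  filter_upwards [hC] with x hx
  rw [norm_mul, norm_mul]
  gcongr
  exact le_trans (hx.trans (le_abs_self C)) (by simp [Complex.norm_real])


/-- Data for a bounded multiplier. -/
structure BddMul where
  h : ℝ → ℂ
  meas : AEStronglyMeasurable h volume
  C : ℝ
  hC : ∀ᵐ x : ℝ, ‖h x‖ ≤ C

namespace BddMul

def toLp (b : BddMul) (ψ : L2) : L2 := (memLp_mul b.meas b.hC ψ).toLp _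

lemma coe_toLp (b : BddMul) (ψ : L2) :
    (b.toLp ψ : ℝ → ℂ) =ᵐ[volume] fun x => b.h x * (ψ : ℝ → ℂ) x :=
  MemLp.coeFn_toLp _

lemma norm_toLp (b : BddMul) (hC0 : 0 ≤ b.C) (ψ : L2) : ‖b.toLp ψ‖ ≤ b.C * ‖ψ‖ := by
  have h1 : ‖b.toLp ψ‖ ≤ ‖(b.C : ℂ) • ψ‖ := by
    apply Lp.norm_le_norm_of_ae_le
    filter_upwards [b.coe_toLp ψ, Lp.coeFn_smul (b.C : ℂ) ψ, b.hC] with x h1 h2 h3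
    rw [h1, h2]
    simp only [Pi.smul_apply, smul_eq_mul, norm_mul]
    gcongr
    simpa using h3.trans (le_abs_self _)
  calc ‖b.toLp ψ‖ ≤ ‖(b.C : ℂ) • ψ‖ := h1
  _ = b.C * ‖ψ‖ := by rw [norm_smul]; simp [Complex.norm_real, _root_.abs_of_nonneg hC0]

/-- The bounded multiplication operator. -/
def op (b : BddMul) : L2 →L[ℂ] L2 := by
  refine LinearMap.mkContinuous
    { toFun := b.toLp
      map_add' := ?_
      map_smul' := ?_ } (max b.C 0) ?_
  · intro ψ φ
    apply Lp.ext
    filter_upwards [b.coe_toLp (ψ + φ), b.coe_toLp ψ, b.coe_toLp φ,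
      Lp.coeFn_add ψ φ, Lp.coeFn_add (b.toLp ψ) (b.toLp φ)] with x h1 h2 h3 h4 h5
    simp only [h1, h5, Pi.add_apply, h2, h3, h4, mul_add]
  · intro c ψ
    apply Lp.ext
    filter_upwards [b.coe_toLp (c • ψ), b.coe_toLp ψ, Lp.coeFn_smul c ψ,
      Lp.coeFn_smul c (b.toLp ψ)] with x h1 h2 h3 h4
    simp only [h1, h4, Pi.smul_apply, h2, h3, smul_eq_mul, RingHom.id_apply]
    ring
  · intro ψ
    exact norm_toLp ⟨b.h, b.meas, max b.C 0,
      b.hC.mono fun x hx => hx.trans (le_max_left _ _)⟩ (le_max_right _ _) ψ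

lemma coe_op (b : BddMul) (ψ : L2) :
    (b.op ψ : ℝ → ℂ) =ᵐ[volume] fun x => b.h x * (ψ : ℝ → ℂ) x := b.coe_toLp ψ

end BddMul

/-- A CLM is *the* multiplication operator of `h`. -/
def IsMul (h : ℝ → ℂ) (T : L2 →L[ℂ] L2) : Prop :=
  ∀ ψ : L2, (T ψ : ℝ → ℂ) =ᵐ[volume] fun x => h x * (ψ : ℝ → ℂ) x

lemma BddMul.isMul (b : BddMul) : IsMul b.h b.op := b.coe_op

lemma IsMul.unique {h h' : ℝ → ℂ} {T T' : L2 →L[ℂ] L2} (hT : IsMul h T) (hT' : IsMul h' T')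
    (hh : h =ᵐ[volume] h') : T = T' := by
  refine ContinuousLinearMap.ext fun ψ => Lp.ext ?_
  filter_upwards [hT ψ, hT' ψ, hh] with x h1 h2 h3
  rw [h1, h2, h3]

lemma IsMul.congr {h h' : ℝ → ℂ} {T : L2 →L[ℂ] L2} (hT : IsMul h T)
    (hh : h =ᵐ[volume] h') : IsMul h' T := by
  intro ψ
  filter_upwards [hT ψ, hh] with x h1 h2
  rw [h1, h2]

lemma IsMul.mul {h h' : ℝ → ℂ} {T T' : L2 →L[ℂ] L2} (hT : IsMul h T) (hT' : IsMul h' T') :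
    IsMul (h * h') (T * T') := by
  intro ψ
  have h1 := hT (T' ψ)
  filter_upwards [hT (T' ψ), hT' ψ] with x h1 h2
  simp only [ContinuousLinearMap.mul_apply, h1, h2, Pi.mul_apply]
  ring

lemma isMul_one : IsMul (fun _ => (1:ℂ)) (1 : L2 →L[ℂ] L2) := by
  intro ψ
  filter_upwards with x
  simp

lemma isMul_algebraMap (r : ℝ) : IsMul (fun _ => (r:ℂ)) (algebraMap ℝ (L2 →L[ℂ] L2) r) := by
  intro ψ
  have h0 : (algebraMap ℝ (L2 →L[ℂ] L2) r) ψ = r • ψ := by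
    rw [Algebra.algebraMap_eq_smul_one]; simp
  rw [h0]
  filter_upwards [Lp.coeFn_smul (r : ℝ) ψ] with x h1
  rw [h1]
  simp [Pi.smul_apply, Complex.real_smul]

/-- selfadjointness of real multiplication operators -/
lemma IsMul.isSelfAdjoint {h : ℝ → ℂ} {T : L2 →L[ℂ] L2} (hT : IsMul h T)
    (hreal : ∀ᵐ x : ℝ, (starRingEnd ℂ) (h x) = h x) : IsSelfAdjoint T := by
  rw [ContinuousLinearMap.isSelfAdjoint_iff_isSymmetric]
  intro ψ φ
  simp only [ContinuousLinearMap.coe_coe]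
  rw [L2.inner_def, L2.inner_def]
  apply integral_congr_ae
  filter_upwards [hT ψ, hT φ, hreal] with x h1 h2 h3
  simp only [RCLike.inner_apply, h1, h2, map_mul, h3]
  ring


lemma IsMul.sub {h h' : ℝ → ℂ} {T T' : L2 →L[ℂ] L2} (hT : IsMul h T) (hT' : IsMul h' T') :
    IsMul (h - h') (T - T') := by
  intro ψ
  filter_upwards [hT ψ, hT' ψ, Lp.coeFn_sub (T ψ) (T' ψ)] with x h1 h2 h3
  simp only [ContinuousLinearMap.sub_apply, h3, Pi.sub_apply, h1, h2]
  ring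

section EssRange

variable (f : ℝ → ℝ)

/-- essential range -/
def essRange : Set ℝ :=
  {c : ℝ | ∀ ε > 0, 0 < volume (f ⁻¹' Set.Ioo (c - ε) (c + ε))}

lemma ae_mem_closure_essRange :
    ∀ᵐ x : ℝ, f x ∈ closure (essRange f) := by
  classical
  set K := closure (essRange f)
  -- cover the complement of K by countably many null-preimage intervals
  have hmem : ∀ c ∉ K, ∃ ε > 0, volume (f ⁻¹' Set.Ioo (c - ε) (c + ε)) = 0 := by
    intro c hc
    have hc' : c ∉ essRange f := fun h => hc (subset_closure h)
    simp only [essRange, Set.mem_setOf_eq, not_forall] at hc'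
    obtain ⟨ε, hε, h0⟩ := hc'
    exact ⟨ε, hε, by simpa using h0⟩
  choose! ε hε h0 using hmem
  set s : ℝ → Set ℝ := fun c => if c ∈ K then ∅ else Set.Ioo (c - ε c) (c + ε c)
  have hsopen : ∀ c, IsOpen (s c) := by
    intro c; by_cases hc : c ∈ K <;> simp [s, hc, isOpen_Ioo]
  obtain ⟨t, htc, hteq⟩ := TopologicalSpace.isOpen_iUnion_countable s hsopen
  have hcover : Kᶜ ⊆ ⋃ i ∈ t, s i := by
    intro c hc
    rw [hteq]
    refine Set.mem_iUnion.2 ⟨c, ?_⟩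
    have h1 := hε c hc
    simp only [s, if_neg hc]
    exact Set.mem_Ioo.2 ⟨by linarith, by linarith⟩
  have hnull : volume (f ⁻¹' (⋃ i ∈ t, s i)) = 0 := by
    rw [Set.preimage_iUnion₂]
    refine measure_biUnion_null_iff htc |>.2 fun c hct => ?_
    by_cases hc : c ∈ K
    · simp [s, hc]
    · simpa [s, if_neg hc] using h0 c hc
  have : volume (f ⁻¹' Kᶜ) = 0 :=
    measure_mono_null (Set.preimage_mono hcover) hnull
  rw [ae_iff]
  simp only [Set.preimage_compl] at this
  exact this

lemma essRange_nonempty : (closure (essRange f)).Nonempty := by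
  by_contra h
  rw [Set.not_nonempty_iff_eq_empty] at h
  have := ae_mem_closure_essRange f
  rw [h] at this
  simp only [Set.mem_empty_iff_false] at this
  have h2 : (volume : Measure ℝ) Set.univ = 0 := by
    simpa [ae_iff] using this
  simp at h2

end EssRange

section Spectrum

variable {f : ℝ → ℝ} (hf : Measurable f) {Mf : L2 →L[ℂ] L2}
  (hMf : IsMul (fun x => (f x : ℂ)) Mf)

open Classical in
/-- the truncation of `f` to the closed essential range -/
def trunc (f : ℝ → ℝ) : ℝ → ℝ := fun x =>
  if f x ∈ closure (essRange f) then f x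
  else (essRange_nonempty f).choose

lemma trunc_mem (f : ℝ → ℝ) (x : ℝ) : trunc f x ∈ closure (essRange f) := by
  unfold trunc
  split
  · assumption
  · exact (essRange_nonempty f).choose_spec

lemma trunc_ae (f : ℝ → ℝ) : (fun x => trunc f x) =ᵐ[volume] f := by
  filter_upwards [ae_mem_closure_essRange f] with x hx
  simp [trunc, hx]

lemma trunc_ae' (f : ℝ → ℝ) :
    (fun x => (trunc f x : ℂ)) =ᵐ[volume] (fun x => (f x : ℂ)) := by
  filter_upwards [trunc_ae f] with x hx
  rw [hx]

include hf in
lemma trunc_measurable : Measurable (trunc f) := by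
  unfold trunc
  exact Measurable.ite (hf isClosed_closure.measurableSet) hf measurable_const

include hf hMf in
lemma isUnit_of_not_mem {r : ℝ} (hr : r ∉ closure (essRange f)) :
    IsUnit (algebraMap ℝ (L2 →L[ℂ] L2) r - Mf) := by
  set K := closure (essRange f) with hK
  have hKne : K.Nonempty := essRange_nonempty f
  have hδ : 0 < Metric.infDist r K := by
    rwa [← IsClosed.notMem_iff_infDist_pos isClosed_closure hKne]
  set δ := Metric.infDist r K with hδdef
  have hdist : ∀ x : ℝ, δ ≤ ‖(r : ℂ) - (trunc f x : ℂ)‖ := by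
    intro x
    have h1 : δ ≤ dist r (trunc f x) := Metric.infDist_le_dist_of_mem (trunc_mem f x)
    rw [← Complex.ofReal_sub, Complex.norm_real]
    rwa [Real.dist_eq] at h1
  have hne : ∀ x : ℝ, (r : ℂ) - (trunc f x : ℂ) ≠ 0 := by
    intro x h
    have h2 := hdist x
    rw [h, norm_zero] at h2
    linarith
  have hmeas : AEStronglyMeasurable (fun x => ((r : ℂ) - (trunc f x : ℂ))⁻¹) volume := by
    refine Measurable.aestronglyMeasurable ?_
    exact (Measurable.sub measurable_const
      (Complex.measurable_ofReal.comp (trunc_measurable hf))).inv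
  have hbound : ∀ᵐ x : ℝ, ‖((r : ℂ) - (trunc f x : ℂ))⁻¹‖ ≤ δ⁻¹ := by
    filter_upwards with x
    rw [norm_inv]
    exact inv_anti₀ hδ (hdist x)
  set b : BddMul := ⟨fun x => ((r : ℂ) - (trunc f x : ℂ))⁻¹, hmeas, δ⁻¹, hbound⟩ with hbdef
  have hMf' : IsMul (fun x => (r : ℂ) - (trunc f x : ℂ)) (algebraMap ℝ (L2 →L[ℂ] L2) r - Mf) := by
    refine IsMul.congr (IsMul.sub (isMul_algebraMap r) hMf) ?_
    filter_upwards [trunc_ae' f] with x hx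
    simp [hx]
  rw [isUnit_iff_exists]
  refine ⟨b.op, ?_, ?_⟩
  · refine IsMul.unique (hMf'.mul b.isMul) isMul_one (Filter.Eventually.of_forall fun x => ?_)
    exact mul_inv_cancel₀ (hne x)
  · refine IsMul.unique (b.isMul.mul hMf') isMul_one (Filter.Eventually.of_forall fun x => ?_)
    exact inv_mul_cancel₀ (hne x)

include hf hMf in
lemma mem_spectrum_of_essRange {c : ℝ} (hc : c ∈ essRange f) :
    c ∈ spectrum ℝ Mf := by
  rw [spectrum.mem_iff]
  intro hu
  obtain ⟨u, hu⟩ := hu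
  set B := ((u⁻¹ : (L2 →L[ℂ] L2)ˣ) : L2 →L[ℂ] L2) with hB
  set ε := (2 * (‖B‖ + 1))⁻¹ with hε
  have hBnn : (0:ℝ) ≤ ‖B‖ := norm_nonneg _
  have hεpos : 0 < ε := by positivity
  have hEpos : 0 < volume (f ⁻¹' Set.Ioo (c - ε) (c + ε)) := hc ε hεpos
  obtain ⟨t, htm, hts, htpos, htfin⟩ :=
    MeasureTheory.Measure.exists_subset_measure_lt_top (hf measurableSet_Ioo) hEpos
  set ψ : L2 := indicatorConstLp 2 htm htfin.ne (1 : ℂ) with hψ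
  have hψnorm : ‖ψ‖ = (volume t).toReal ^ (1/(2:ℝ)) := by
    rw [hψ, norm_indicatorConstLp (by norm_num) (by norm_num)]
    simp; rfl
  have hψpos : 0 < ‖ψ‖ := by
    rw [hψnorm]
    have : 0 < (volume t).toReal := ENNReal.toReal_pos htpos.ne' htfin.ne
    positivity
  -- ‖(c•1 - Mf) ψ‖ ≤ ε ‖ψ‖
  have hMf' : IsMul (fun x => (c : ℂ) - (f x : ℂ)) (algebraMap ℝ (L2 →L[ℂ] L2) c - Mf) :=
    IsMul.sub (isMul_algebraMap c) hMf
  have hkey : ‖(algebraMap ℝ (L2 →L[ℂ] L2) c - Mf) ψ‖ ≤ ε * ‖ψ‖ := by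
    have h1 : ‖(algebraMap ℝ (L2 →L[ℂ] L2) c - Mf) ψ‖ ≤ ‖(ε : ℂ) • ψ‖ := by
      apply Lp.norm_le_norm_of_ae_le
      filter_upwards [hMf' ψ, indicatorConstLp_coeFn (p := 2) (hs := htm)
        (hμs := htfin.ne) (c := (1:ℂ)), Lp.coeFn_smul (ε : ℂ) ψ] with x h1 h2 h3
      rw [← hψ] at h2
      rw [h1, h3]
      simp only [Pi.smul_apply, smul_eq_mul]
      rw [h2]
      by_cases hx : x ∈ t
      · have hfx := hts hx
        simp only [Set.mem_preimage, Set.mem_Ioo] at hfx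
        simp only [Set.indicator_of_mem hx, mul_one]
        rw [← Complex.ofReal_sub, Complex.norm_real, Complex.norm_real,
          Real.norm_eq_abs, Real.norm_eq_abs, abs_of_pos hεpos, abs_le]
        exact ⟨by linarith [hfx.2], by linarith [hfx.1]⟩
      · simp [Set.indicator_of_notMem hx]
    rw [norm_smul] at h1
    simpa [Complex.norm_real, abs_of_pos hεpos] using h1
  -- ψ = B ((c•1 - Mf) ψ)
  have hinv : B ((algebraMap ℝ (L2 →L[ℂ] L2) c - Mf) ψ) = ψ := by
    have h4 : ((↑u⁻¹ : L2 →L[ℂ] L2) * ↑u) = 1 := u.inv_mul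
    calc B ((algebraMap ℝ (L2 →L[ℂ] L2) c - Mf) ψ)
        = ((↑u⁻¹ : L2 →L[ℂ] L2) * ↑u) ψ := by rw [hu]; rfl
    _ = ψ := by rw [h4]; rfl
  have : ‖ψ‖ ≤ ‖B‖ * (ε * ‖ψ‖) := by
    calc ‖ψ‖ = ‖B ((algebraMap ℝ (L2 →L[ℂ] L2) c - Mf) ψ)‖ := (congrArg norm hinv).symm
    _ ≤ ‖B‖ * ‖(algebraMap ℝ (L2 →L[ℂ] L2) c - Mf) ψ‖ := B.le_opNorm _
    _ ≤ ‖B‖ * (ε * ‖ψ‖) := by gcongr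
  have hcontr : ‖B‖ * ε < 1 := by
    rw [hε]
    rw [mul_inv_lt_iff₀ (by positivity)]
    nlinarith
  nlinarith [hψpos]

include hf hMf in
lemma spectrum_eq : spectrum ℝ Mf = closure (essRange f) := by
  apply Set.Subset.antisymm
  · intro r hr
    by_contra hrK
    exact (spectrum.mem_iff.mp hr) (isUnit_of_not_mem hf hMf hrK)
  · exact closure_minimal (fun c hc => mem_spectrum_of_essRange hf hMf hc)
      (spectrum.isClosed Mf)

section CFC

lemma BddMul.norm_op_le (b : BddMul) : ‖b.op‖ ≤ max b.C 0 :=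
  LinearMap.mkContinuous_norm_le _ (le_max_right _ _) _

include hf hMf in
lemma isSelfAdjoint_of_isMul : IsSelfAdjoint Mf :=
  hMf.isSelfAdjoint (Filter.Eventually.of_forall fun x => Complex.conj_ofReal _)

variable (f) in
/-- pointwise value of a continuous function of the spectrum composed with `trunc f` -/
def specFun (hf : Measurable f) (hMf : IsMul (fun x => (f x : ℂ)) Mf)
    (h : C(spectrum ℝ Mf, ℝ)) : ℝ → ℂ := fun x =>
  (h ⟨trunc f x, by rw [spectrum_eq hf hMf]; exact trunc_mem f x⟩ : ℝ)

lemma specFun_meas (h : C(spectrum ℝ Mf, ℝ)) :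
    AEStronglyMeasurable (specFun f hf hMf h) volume := by
  refine Measurable.aestronglyMeasurable ?_
  refine Complex.measurable_ofReal.comp ?_
  exact h.continuous.measurable.comp ((trunc_measurable hf).subtype_mk)

lemma specFun_bound (h : C(spectrum ℝ Mf, ℝ)) :
    ∀ᵐ x : ℝ, ‖specFun f hf hMf h x‖ ≤ ‖h‖ := by
  filter_upwards with x
  rw [specFun, Complex.norm_real]
  exact h.norm_coe_le_norm _

/-- the bundled multiplier -/
def specMul (h : C(spectrum ℝ Mf, ℝ)) : L2 →L[ℂ] L2 :=
  (BddMul.op ⟨specFun f hf hMf h, specFun_meas hf hMf h, ‖h‖, specFun_bound hf hMf h⟩)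

lemma specMul_isMul (h : C(spectrum ℝ Mf, ℝ)) :
    IsMul (specFun f hf hMf h) (specMul hf hMf h) := BddMul.isMul _

set_option maxHeartbeats 1000000 in
/-- the star algebra homomorphism given by multiplication operators -/
def specHom : C(spectrum ℝ Mf, ℝ) →⋆ₐ[ℝ] (L2 →L[ℂ] L2) where
  toFun := specMul hf hMf
  map_one' := IsMul.unique (specMul_isMul hf hMf 1) isMul_one
    (Filter.Eventually.of_forall fun x => by simp [specFun])
  map_mul' h₁ h₂ := IsMul.unique (specMul_isMul hf hMf (h₁ * h₂))
    ((specMul_isMul hf hMf h₁).mul (specMul_isMul hf hMf h₂))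
    (Filter.Eventually.of_forall fun x => by simp [specFun])
  map_zero' := by
    refine IsMul.unique (specMul_isMul hf hMf 0) (T' := 0) (h' := fun _ => (0:ℂ)) ?_ ?_
    · intro ψ
      filter_upwards [Lp.coeFn_zero ℂ 2 (volume : Measure ℝ)] with x hx
      simp only [ContinuousLinearMap.zero_apply]
      rw [hx]
      simp
    · exact Filter.Eventually.of_forall fun x => by simp [specFun]
  map_add' h₁ h₂ := by
    refine IsMul.unique (specMul_isMul hf hMf (h₁ + h₂)) ?_
      (Filter.Eventually.of_forall fun x => rfl)
    intro ψ
    filter_upwards [specMul_isMul hf hMf h₁ ψ, specMul_isMul hf hMf h₂ ψ,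
      Lp.coeFn_add (specMul hf hMf h₁ ψ) (specMul hf hMf h₂ ψ)] with x h1 h2 h3
    simp only [ContinuousLinearMap.add_apply, h3, Pi.add_apply, h1, h2, specFun,
      ContinuousMap.add_apply]
    push_cast
    ring
  commutes' r := IsMul.unique (specMul_isMul hf hMf (algebraMap ℝ _ r))
    (isMul_algebraMap r)
    (Filter.Eventually.of_forall fun x => by
      simp [specFun, _root_.algebraMap_apply])
  map_star' h := by
    have h1 : star h = h := by
      ext x
      simp [star_trivial]
    rw [h1]
    exact ((specMul_isMul hf hMf h).isSelfAdjoint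
      (Filter.Eventually.of_forall fun x => Complex.conj_ofReal _)).symm

lemma specHom_continuous : Continuous (specHom hf hMf) := by
  refine AddMonoidHomClass.continuous_of_bound (specHom hf hMf) 1 fun h => ?_
  rw [one_mul]
  calc ‖specHom hf hMf h‖ ≤ max ‖h‖ 0 := BddMul.norm_op_le _
  _ = ‖h‖ := max_eq_left (norm_nonneg h)

lemma cfcHom_eq_specHom :
    cfcHom (isSelfAdjoint_of_isMul hf hMf) (R := ℝ) = specHom hf hMf := by
  refine cfcHom_eq_of_continuous_of_map_id _ _ (specHom_continuous hf hMf) ?_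
  refine IsMul.unique (specMul_isMul hf hMf _) hMf ?_
  filter_upwards [trunc_ae' f] with x hx
  exact hx

include hf hMf in
lemma cfc_eq_mul {Φ : ℝ → ℝ} (hΦ : ContinuousOn Φ (spectrum ℝ Mf))
    {MΦf : L2 →L[ℂ] L2} (hMΦf : IsMul (fun x => (Φ (f x) : ℂ)) MΦf) :
    cfc Φ Mf = MΦf := by
  rw [cfc_apply Φ Mf (isSelfAdjoint_of_isMul hf hMf) hΦ, cfcHom_eq_specHom hf hMf]
  refine IsMul.unique (specMul_isMul hf hMf _) hMΦf ?_
  filter_upwards [trunc_ae f] with x hx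
  simp only [specFun, Set.restrict_apply, ContinuousMap.coe_mk, hx]

end CFC

end Spectrum

section Conj

variable {u v : L2 →L[ℂ] L2} (huv : u * v = 1) (hvu : v * u = 1) (hstar : star u = v)

include hstar hvu in
lemma star_v : star v = u := by rw [← hstar, star_star]

include huv hvu hstar in
/-- conjugation by a unitary as a star algebra homomorphism -/
def conjHom : (L2 →L[ℂ] L2) →⋆ₐ[ℝ] (L2 →L[ℂ] L2) where
  toFun x := u * x * v
  map_one' := by show u * 1 * v = 1; rw [mul_one]; exact huv
  map_mul' x y := by
    show u * (x * y) * v = (u * x * v) * (u * y * v)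
    have h1 : (u * x * v) * (u * y * v) = u * x * (v * u) * (y * v) := by noncomm_ring
    rw [h1, hvu]
    noncomm_ring
  map_zero' := by simp
  map_add' x y := by simp [mul_add, add_mul]
  commutes' r := by
    simp only [Algebra.algebraMap_eq_smul_one]
    rw [mul_smul_comm, mul_one, smul_mul_assoc, huv]
  map_star' x := by
    show u * star x * v = star (u * x * v)
    rw [star_mul, star_mul, hstar, star_v hvu hstar]
    noncomm_ring

include huv hvu in
lemma isUnit_conj {b : L2 →L[ℂ] L2} (hb : IsUnit b) : IsUnit (u * b * v) := by
  obtain ⟨w, hw⟩ := hb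
  rw [isUnit_iff_exists]
  refine ⟨u * ↑w⁻¹ * v, ?_, ?_⟩
  · have h1 : u * b * v * (u * ↑w⁻¹ * v) = u * (b * (v * u) * ↑w⁻¹) * v := by noncomm_ring
    rw [h1, hvu, mul_one, ← hw, Units.mul_inv, mul_one, huv]
  · have h1 : u * ↑w⁻¹ * v * (u * b * v) = u * (↑w⁻¹ * (v * u) * b) * v := by noncomm_ring
    rw [h1, hvu, mul_one, ← hw, Units.inv_mul, mul_one, huv]

include huv hvu in
lemma spectrum_conj (a : L2 →L[ℂ] L2) : spectrum ℝ (u * a * v) = spectrum ℝ a := by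
  have key : ∀ r : ℝ, algebraMap ℝ (L2 →L[ℂ] L2) r - u * a * v
      = u * (algebraMap ℝ (L2 →L[ℂ] L2) r - a) * v := by
    intro r
    rw [mul_sub, sub_mul]
    congr 1
    rw [Algebra.algebraMap_eq_smul_one, mul_smul_comm, mul_one, smul_mul_assoc, huv]
  ext r
  simp only [spectrum.mem_iff, key r, not_iff_not]
  constructor
  · intro h
    have h2 := isUnit_conj hvu huv h
    have h3 : v * (u * (algebraMap ℝ (L2 →L[ℂ] L2) r - a) * v) * u
        = (v * u) * (algebraMap ℝ (L2 →L[ℂ] L2) r - a) * (v * u) := by noncomm_ring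
    rwa [h3, hvu, one_mul, mul_one] at h2
  · exact isUnit_conj huv hvu

include huv hvu hstar in
lemma isSelfAdjoint_conj {a : L2 →L[ℂ] L2} (ha : IsSelfAdjoint a) :
    IsSelfAdjoint (u * a * v) := by
  rw [IsSelfAdjoint, star_mul, star_mul, hstar, star_v hvu hstar, ha.star_eq]
  noncomm_ring

include huv hvu hstar in
lemma cfc_conj {a : L2 →L[ℂ] L2} (ha : IsSelfAdjoint a) {Φ : ℝ → ℝ}
    (hΦ : ContinuousOn Φ (spectrum ℝ a)) :
    cfc Φ (u * a * v) = u * cfc Φ a * v := by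
  have hb : IsSelfAdjoint (u * a * v) := isSelfAdjoint_conj huv hvu hstar ha
  have hspec : spectrum ℝ (u * a * v) = spectrum ℝ a := spectrum_conj huv hvu a
  set g : C(spectrum ℝ a, spectrum ℝ (u * a * v)) :=
    ↑(Homeomorph.setCongr hspec.symm) with hg
  have key : cfcHom hb (R := ℝ) =
      ((conjHom huv hvu hstar).comp ((cfcHom ha (R := ℝ)).comp
        (ContinuousMap.compStarAlgHom' ℝ ℝ g))) := by
    refine cfcHom_eq_of_continuous_of_map_id hb _ ?_ ?_
    · show Continuous fun h : C(spectrum ℝ (u * a * v), ℝ) => u * cfcHom ha (h.comp g) * v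
      have hc1 : Continuous fun x : L2 →L[ℂ] L2 => u * x * v :=
        (continuous_mul_right v).comp (continuous_mul_left u)
      exact hc1.comp ((cfcHom_continuous ha).comp
        (ContinuousMap.continuous_precomp g))
    · show u * cfcHom ha ((ContinuousMap.restrict _ (ContinuousMap.id ℝ)).comp g) * v
        = u * a * v
      have h2 : (ContinuousMap.restrict (spectrum ℝ (u * a * v)) (ContinuousMap.id ℝ)).comp g
          = ContinuousMap.restrict (spectrum ℝ a) (ContinuousMap.id ℝ) := by ext x; rfl
      rw [h2, cfcHom_id ha]
  rw [cfc_apply Φ (u * a * v) hb (hspec ▸ hΦ), key]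
  show u * cfcHom ha (ContinuousMap.comp _ g) * v = _
  have h3 : (ContinuousMap.mk ((spectrum ℝ (u * a * v)).restrict Φ) (by
      rw [hspec]; exact hΦ.restrict)).comp g
      = ContinuousMap.mk ((spectrum ℝ a).restrict Φ) hΦ.restrict := by ext x; rfl
  rw [cfc_apply Φ a ha hΦ]
  congr 1

end Conj

/-- A bounded operator is positive if `⟨ψ, Cψ⟩ ≥ 0` for all `ψ`. -/
def IsPos (C : L2 →L[ℂ] L2) : Prop :=
  ∀ ψ : L2, 0 ≤ (inner ℂ ψ (C ψ) : ℂ)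

section Analysis

open NormedSpace

/-- the real normed algebra structure compatible with `ContinuousLinearMap.algebra` -/
def instNAR : NormedAlgebra ℝ (L2 →L[ℂ] L2) :=
  { (inferInstance : Algebra ℝ (L2 →L[ℂ] L2)) with norm_smul_le := norm_smul_le }

/-- rational normed algebra structure -/
def instNAQ : NormedAlgebra ℚ (L2 →L[ℂ] L2) := NormedAlgebra.restrictScalars ℚ ℂ (L2 →L[ℂ] L2)

lemma star_smul_real (r : ℝ) (x : L2 →L[ℂ] L2) : star (r • x) = star r • star x := by
  rw [RCLike.real_smul_eq_coe_smul (K := ℂ), RCLike.real_smul_eq_coe_smul (K := ℂ), star_smul]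
  simp

/-- star module structure over the reals -/
def instSMR : StarModule ℝ (L2 →L[ℂ] L2) := ⟨star_smul_real⟩

attribute [local instance] instNAR instNAQ instSMR

/-- the unitary group generated by `G` -/
def expU (G : L2 →L[ℂ] L2) (t : ℝ) : L2 →L[ℂ] L2 :=
  NormedSpace.exp (t • (Complex.I • G))

variable {G : L2 →L[ℂ] L2} (hG : IsSelfAdjoint G)

include hG in
lemma star_smul_I : star (Complex.I • G) = -(Complex.I • G) := by
  rw [star_smul, hG.star_eq, star_def, Complex.conj_I, neg_smul]

include hG in
lemma expU_star (t : ℝ) : star (expU G t) = expU G (-t) := by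
  rw [expU, expU, NormedSpace.star_exp]
  congr 1
  rw [star_smul, star_trivial, star_smul_I hG, smul_neg, ← neg_smul]

lemma expU_mul_neg (t : ℝ) : expU G t * expU G (-t) = 1 := by
  rw [expU, expU, ← NormedSpace.exp_add_of_commute]
  · rw [← add_smul, add_neg_cancel, zero_smul, NormedSpace.exp_zero]
  · exact (Commute.refl _).smul_left _ |>.smul_right _

lemma expU_neg_mul (t : ℝ) : expU G (-t) * expU G t = 1 := by
  have := expU_mul_neg (G := G) (-t)
  rwa [neg_neg] at this

lemma expU_zero : expU G 0 = 1 := by rw [expU, zero_smul, NormedSpace.exp_zero]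

lemma expU_neg_eq (t : ℝ) :
    expU G (-t) = NormedSpace.exp (t • (-(Complex.I • G))) := by
  rw [expU, smul_neg, ← neg_smul]

lemma commute_I_expU (t : ℝ) : Complex.I • G * expU G t = expU G t * (Complex.I • G) :=
  ((Commute.refl _).smul_right t).exp_right |>.eq

lemma hasDerivAt_conjExp (B : L2 →L[ℂ] L2) (t : ℝ) :
    HasDerivAt (fun s => expU G s * B * expU G (-s))
      (expU G t * ((Complex.I • G) * B - B * (Complex.I • G)) * expU G (-t)) t := by
  have hV : HasDerivAt (fun s : ℝ => expU G s) (expU G t * (Complex.I • G)) t :=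
    hasDerivAt_exp_smul_const (𝕂 := ℝ) (Complex.I • G) t
  have hW : HasDerivAt (fun s : ℝ => expU G (-s)) (expU G (-t) * (-(Complex.I • G))) t := by
    simp only [expU_neg_eq]
    exact hasDerivAt_exp_smul_const (𝕂 := ℝ) (-(Complex.I • G)) t
  have h1 := (hV.mul (hasDerivAt_const t B)).mul hW
  simp only [mul_zero, add_zero, zero_mul] at h1
  have hc := commute_I_expU (G := G) (-t)
  have h3 : expU G (-t) * -(Complex.I • G) = -(Complex.I • G * expU G (-t)) := by
    rw [mul_neg, ← hc]
  rw [h3] at h1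
  exact h1.congr_deriv (by simp only [Pi.mul_apply]; noncomm_ring)

variable (ψ : L2) in
/-- the real part of the expectation value, as a function of the operator -/
def innerRe (ψ : L2) : (L2 →L[ℂ] L2) →L[ℝ] ℝ :=
  Complex.reCLM.comp (((innerSL ℂ ψ).comp
    (ContinuousLinearMap.apply ℂ L2 ψ)).restrictScalars ℝ)

lemma innerRe_apply (ψ : L2) (T : L2 →L[ℂ] L2) :
    innerRe ψ T = (inner ℂ ψ (T ψ) : ℂ).re := rfl

lemma hasDerivAt_innerRe_conjExp (ψ : L2) (B : L2 →L[ℂ] L2) (t : ℝ) :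
    HasDerivAt (fun s => innerRe ψ (expU G s * B * expU G (-s)))
      (innerRe ψ (expU G t * ((Complex.I • G) * B - B * (Complex.I • G)) * expU G (-t))) t :=
  ((innerRe ψ).hasFDerivAt.comp_hasDerivAt t (hasDerivAt_conjExp B t))

include hG in
lemma inner_conjExp (ψ : L2) (T : L2 →L[ℂ] L2) (t : ℝ) :
    (inner ℂ ψ ((expU G t * T * expU G (-t)) ψ) : ℂ)
      = inner ℂ (expU G (-t) ψ) (T (expU G (-t) ψ)) := by
  have h1 : (expU G t * T * expU G (-t)) ψ = expU G t (T (expU G (-t) ψ)) := rfl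
  rw [h1, ← ContinuousLinearMap.adjoint_inner_left]
  congr 1
  have : ContinuousLinearMap.adjoint (expU G t) = star (expU G t) := rfl
  rw [this, expU_star hG]

include hG in
lemma antitone_innerRe_conjExp {a : L2 →L[ℂ] L2}
    (hpos : IsPos (Complex.I • (a * G - G * a))) (ψ : L2) :
    Antitone (fun s => innerRe ψ (expU G s * a * expU G (-s))) := by
  refine antitone_of_deriv_nonpos (fun t => (hasDerivAt_innerRe_conjExp ψ a t).differentiableAt)
    fun t => ?_
  rw [(hasDerivAt_innerRe_conjExp ψ a t).deriv]
  have key : (Complex.I • G) * a - a * (Complex.I • G)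
      = -(Complex.I • (a * G - G * a)) := by
    rw [smul_sub, smul_mul_assoc, mul_smul_comm, neg_sub]
  rw [key]
  have h2 : expU G t * -(Complex.I • (a * G - G * a)) * expU G (-t)
      = -(expU G t * (Complex.I • (a * G - G * a)) * expU G (-t)) := by noncomm_ring
  rw [h2, map_neg, neg_nonpos, innerRe_apply, inner_conjExp hG]
  exact Complex.le_def.mp (hpos _) |>.1

lemma isSelfAdjoint_inner_real {T : L2 →L[ℂ] L2} (hT : IsSelfAdjoint T) (ψ : L2) :
    (starRingEnd ℂ) (inner ℂ ψ (T ψ) : ℂ) = inner ℂ ψ (T ψ) := by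
  rw [inner_conj_symm]
  have h1 : ContinuousLinearMap.adjoint T = T := hT.star_eq
  conv_lhs => rw [← h1, ContinuousLinearMap.adjoint_inner_left]

lemma isPos_of_selfAdjoint_re {T : L2 →L[ℂ] L2} (hT : IsSelfAdjoint T)
    (h : ∀ ψ : L2, 0 ≤ innerRe ψ T) : IsPos T := by
  intro ψ
  rw [Complex.le_def]
  have him := isSelfAdjoint_inner_real hT ψ
  rw [Complex.conj_eq_iff_im] at him
  exact ⟨by simpa [innerRe_apply] using h ψ, by simpa using him.symm⟩

lemma deriv_nonpos_of_le {θ : ℝ → ℝ} {d : ℝ} (hθ : HasDerivAt θ d 0)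
    (h : ∀ t : ℝ, 0 ≤ t → θ t ≤ θ 0) : d ≤ 0 := by
  have h1 := hasDerivAt_iff_tendsto_slope.mp hθ
  have h2 : Tendsto (slope θ 0) (nhdsWithin 0 (Set.Ioi 0)) (nhds d) :=
    h1.mono_left (nhdsWithin_mono 0 fun t ht => ne_of_gt ht)
  refine le_of_tendsto h2 ?_
  filter_upwards [self_mem_nhdsWithin] with t ht
  rw [slope_def_field, div_nonpos_iff]
  right
  constructor
  · simpa using sub_nonpos.mpr (h t (le_of_lt ht))
  · simpa using le_of_lt ht

lemma isSelfAdjoint_commutator {B G : L2 →L[ℂ] L2} (hB : IsSelfAdjoint B)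
    (hG : IsSelfAdjoint G) : IsSelfAdjoint (Complex.I • (B * G - G * B)) := by
  rw [IsSelfAdjoint, star_smul, star_sub, star_mul, star_mul, hB.star_eq, hG.star_eq,
    Complex.star_def, Complex.conj_I, neg_smul, ← smul_neg, neg_sub]

end Analysis

end Aux


/-- If `i[f(P), g(Q)] ≥ 0` and `Φ` is continuous and operator monotone on an open interval `I`
containing the closure of the essential range of `f`, then `i[(Φ∘f)(P), g(Q)] ≥ 0`. -/
theorem stmt13 (f g : ℝ → ℝ) (hfmeas : Measurable f) (hgmeas : Measurable g)
    (hfbdd : ∃ M, ∀ x, |f x| ≤ M) (hgbdd : ∃ M, ∀ x, |g x| ≤ M)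
    (U : L2 ≃ₗᵢ[ℂ] L2) (hU : IsFourierPlancherel U)
    (Mf Mg : L2 →L[ℂ] L2) (hMf : IsMulOp f Mf) (hMg : IsMulOp g Mg)
    (hpos : IsPosOp (commOp U Mf Mg))
    (I : Set ℝ) (hIopen : IsOpen I) (hIconn : I.OrdConnected)
    (hIrange : closure {c : ℝ | ∀ ε > 0,
        0 < MeasureTheory.volume (f ⁻¹' Set.Ioo (c - ε) (c + ε))} ⊆ I)
    (Φ : ℝ → ℝ) (hΦcont : ContinuousOn Φ I)
    (hΦmono : ∀ A B : L2 →L[ℂ] L2, IsSelfAdjoint A → IsSelfAdjoint B →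
      spectrum ℝ A ⊆ I → spectrum ℝ B ⊆ I → IsPosOp (B - A) →
      IsPosOp (cfc (instCFC := IsSelfAdjoint.instContinuousFunctionalCalculus) Φ B -
        cfc (instCFC := IsSelfAdjoint.instContinuousFunctionalCalculus) Φ A))
    (MΦf : L2 →L[ℂ] L2) (hMΦf : IsMulOp (fun x => Φ (f x)) MΦf) :
    IsPosOp (commOp U MΦf Mg) := by
  classical
  replace hΦmono : ∀ A B : L2 →L[ℂ] L2, IsSelfAdjoint A → IsSelfAdjoint B →
      spectrum ℝ A ⊆ I → spectrum ℝ B ⊆ I → IsPosOp (B - A) →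
      IsPosOp (cfc Φ B - cfc Φ A) := hΦmono
  have hMf' : Aux.IsMul (fun x => (f x : ℂ)) Mf := hMf
  have hMg' : Aux.IsMul (fun x => (g x : ℂ)) Mg := hMg
  have hMΦf' : Aux.IsMul (fun x => (Φ (f x) : ℂ)) MΦf := hMΦf
  set u₀ : L2 →L[ℂ] L2 := U.symm.toLinearIsometry.toContinuousLinearMap with hu₀
  set w₀ : L2 →L[ℂ] L2 := U.toLinearIsometry.toContinuousLinearMap with hw₀
  have huw : u₀ * w₀ = 1 := by
    ext ψ
    simp [hu₀, hw₀, ContinuousLinearMap.mul_apply]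
  have hwu : w₀ * u₀ = 1 := by
    ext ψ
    simp [hu₀, hw₀, ContinuousLinearMap.mul_apply]
  have hstar : star u₀ = w₀ := by
    have h1 : w₀ = ContinuousLinearMap.adjoint u₀ := by
      rw [ContinuousLinearMap.eq_adjoint_iff]
      intro x y
      have h2 := U.inner_map_map x (U.symm y)
      simp only [LinearIsometryEquiv.apply_symm_apply] at h2
      simpa [hu₀, hw₀] using h2
    rw [h1]
    rfl
  set a : L2 →L[ℂ] L2 := conjF U Mf with ha
  have haconj : a = u₀ * Mf * w₀ := rfl
  have hMfsa : IsSelfAdjoint Mf := Aux.isSelfAdjoint_of_isMul hfmeas hMf'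
  have hMgsa : IsSelfAdjoint Mg := Aux.isSelfAdjoint_of_isMul hgmeas hMg'
  have hasa : IsSelfAdjoint a := haconj ▸ Aux.isSelfAdjoint_conj huw hwu hstar hMfsa
  have hspecMf : spectrum ℝ Mf = closure (Aux.essRange f) := Aux.spectrum_eq hfmeas hMf'
  have hspeca : spectrum ℝ a = spectrum ℝ Mf := haconj ▸ Aux.spectrum_conj huw hwu Mf
  have hKI : closure (Aux.essRange f) ⊆ I := hIrange
  have hspecaI : spectrum ℝ a ⊆ I := by rw [hspeca, hspecMf]; exact hKI
  have hΦa : ContinuousOn Φ (spectrum ℝ a) := hΦcont.mono hspecaI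
  have hΦMf : ContinuousOn Φ (spectrum ℝ Mf) := hΦcont.mono (by rw [hspecMf]; exact hKI)
  have hcfcMf : cfc Φ Mf = MΦf := Aux.cfc_eq_mul hfmeas hMf' hΦMf hMΦf'
  have hcfca : cfc Φ a = conjF U MΦf := by
    rw [haconj, Aux.cfc_conj huw hwu hstar hMfsa hΦMf, hcfcMf]
    rfl
  have hposC : Aux.IsPos (Complex.I • (a * Mg - Mg * a)) := fun ψ => hpos ψ
  set V := Aux.expU Mg with hV
  have hVstar : ∀ t : ℝ, star (V t) = V (-t) := Aux.expU_star hMgsa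
  set B' := cfc Φ a with hB'
  have hMΦfsa : IsSelfAdjoint MΦf := hMΦf'.isSelfAdjoint
    (Filter.Eventually.of_forall fun x => Complex.conj_ofReal _)
  have hB'sa : IsSelfAdjoint B' := by
    rw [hcfca]
    exact Aux.isSelfAdjoint_conj huw hwu hstar hMΦfsa
  -- step: the conjugated expectation values of `B'` are maximal at `t = 0`
  have hmain : ∀ t : ℝ, 0 ≤ t → ∀ ψ : L2,
      Aux.innerRe ψ (V t * B' * V (-t)) ≤ Aux.innerRe ψ B' := by
    intro t ht ψ
    have hmulneg := Aux.expU_mul_neg (G := Mg) t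
    have hnegmul := Aux.expU_neg_mul (G := Mg) t
    have hAt_sa : IsSelfAdjoint (V t * a * V (-t)) :=
      Aux.isSelfAdjoint_conj hmulneg hnegmul (hVstar t) hasa
    have hAt_spec : spectrum ℝ (V t * a * V (-t)) ⊆ I := by
      rw [Aux.spectrum_conj hmulneg hnegmul]
      exact hspecaI
    -- positivity of a - V t a V(-t) via the antitone expectation values
    have hsub : IsPosOp (a - V t * a * V (-t)) := by
      refine Aux.isPos_of_selfAdjoint_re (hasa.sub hAt_sa) fun φ => ?_
      have hanti := Aux.antitone_innerRe_conjExp hMgsa hposC φ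
      have h1 : (fun s => Aux.innerRe φ (Aux.expU Mg s * a * Aux.expU Mg (-s))) t
          ≤ (fun s => Aux.innerRe φ (Aux.expU Mg s * a * Aux.expU Mg (-s))) 0 := hanti ht
      simp only [neg_zero, Aux.expU_zero, one_mul, mul_one] at h1
      rw [map_sub]
      exact sub_nonneg.mpr h1
    have hΦpos := hΦmono (V t * a * V (-t)) a hAt_sa hasa hAt_spec hspecaI hsub
    rw [Aux.cfc_conj hmulneg hnegmul (hVstar t) hasa hΦa] at hΦpos
    have h2 := hΦpos ψ
    have h3 : (cfc Φ a - V t * cfc Φ a * V (-t)) ψ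
        = (cfc Φ a) ψ - (V t * cfc Φ a * V (-t)) ψ := rfl
    have h4 := (Complex.le_def.mp h2).1
    rw [h3, inner_sub_right] at h4
    simp only [Complex.zero_re, Complex.sub_re] at h4
    rw [Aux.innerRe_apply, Aux.innerRe_apply, hB']
    linarith
  -- conclude via the derivative at 0
  refine Aux.isPos_of_selfAdjoint_re ?_ fun ψ => ?_
  · show IsSelfAdjoint (Complex.I • (conjF U MΦf * Mg - Mg * conjF U MΦf))
    rw [← hcfca]
    exact Aux.isSelfAdjoint_commutator hB'sa hMgsa
  · have hder := Aux.hasDerivAt_innerRe_conjExp (G := Mg) ψ B' 0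
    simp only [neg_zero, Aux.expU_zero, one_mul, mul_one] at hder
    have hle : ∀ t : ℝ, 0 ≤ t →
        (fun s => Aux.innerRe ψ (Aux.expU Mg s * B' * Aux.expU Mg (-s))) t
          ≤ (fun s => Aux.innerRe ψ (Aux.expU Mg s * B' * Aux.expU Mg (-s))) 0 := by
      intro t ht
      simp only [neg_zero, Aux.expU_zero, one_mul, mul_one]
      exact hmain t ht ψ
    have hd := Aux.deriv_nonpos_of_le hder hle
    have hkey : (Complex.I • Mg) * B' - B' * (Complex.I • Mg)
        = -(Complex.I • (B' * Mg - Mg * B')) := by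
      rw [smul_sub, smul_mul_assoc, mul_smul_comm, neg_sub]
    rw [hkey, map_neg] at hd
    have h5 : 0 ≤ Aux.innerRe ψ (Complex.I • (B' * Mg - Mg * B')) := by linarith
    have h6 : commOp U MΦf Mg = Complex.I • (B' * Mg - Mg * B') := by
      rw [hcfca]
      rfl
    rw [h6]
    exact h5

end
end

section
/- Let a > 0 and let g : ℝ → ℝ be bounded and three times continuously differentiable with g′(x) > 0 for all x, and suppose the function ψ := (g′)^(−1/2) satisfies −ψ″(x) + a²·ψ(x) ≥ 0 for all x ∈ ℝ. Then: (i) |ψ′(x)| < a·ψ(x) for all x; (ii) g′(x₀) e^{−2a|x − x₀|} ≤ g′(x) ≤ g′(x₀) e^{2a|x − x₀|} for all x, x₀ ∈ ℝ; (iii) |g″(x)| ≤ 2a·g′(x) for all x; (iv) g′(x) ≤ 2a·(sup g − g(x)) and g′(x) ≤ 2a·(g(x) − inf g) for all x; (v) if g′ is an even function, then g′(x) ≥ g′(0)/cosh²(ax) for all x. -/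
open Real Set

noncomputable section


private lemma exp_sq_inv' (t : ℝ) : Real.exp (-(2*t)) = ((Real.exp t)^2)⁻¹ := by
  rw [sq, ← Real.exp_add, ← Real.exp_neg]; ring_nf

private lemma inv_sq_bound' {P Q E : ℝ} (hP : 0 < P) (hQ : 0 < Q) (hE : 0 < E)
    (h : P ≤ Q * E) : (Q^2)⁻¹ * (E^2)⁻¹ ≤ (P^2)⁻¹ := by
  rw [← mul_inv, ← mul_pow]
  apply inv_anti₀ (by positivity)
  nlinarith

/-- One-sided decay: if `ψ'' ≤ a²ψ` and `ψ'(x₀) ≥ aψ(x₀)`, then `ψ` decays exponentially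
backwards from `x₀`. -/
private lemma L1' {a : ℝ} (ha : 0 < a) {ψ : ℝ → ℝ}
    (hψd : Differentiable ℝ ψ) (hψd2 : Differentiable ℝ (deriv ψ))
    (hineq : ∀ x, deriv (deriv ψ) x ≤ a^2 * ψ x)
    {x₀ : ℝ} (h0 : a * ψ x₀ ≤ deriv ψ x₀) :
    ∀ x ≤ x₀, ψ x ≤ ψ x₀ * Real.exp (a * (x - x₀)) := by
  have hexp : ∀ x : ℝ, HasDerivAt (fun y => Real.exp (a*y)) (a * Real.exp (a*x)) x := by
    intro x
    have h1 : HasDerivAt (fun y : ℝ => a*y) a x := by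
      simpa using (hasDerivAt_id x).const_mul a
    exact ((Real.hasDerivAt_exp (a*x)).comp x h1).congr_deriv (mul_comm _ _)
  set H : ℝ → ℝ := fun x => Real.exp (a*x) * (deriv ψ x - a * ψ x) with hH
  have hHder : ∀ x, HasDerivAt H (Real.exp (a*x) * (deriv (deriv ψ) x - a^2 * ψ x)) x := by
    intro x
    have h2 : HasDerivAt (fun y => deriv ψ y - a * ψ y)
        (deriv (deriv ψ) x - a * deriv ψ x) x :=
      ((hψd2 x).hasDerivAt).sub (((hψd x).hasDerivAt).const_mul a)
    have := (hexp x).fun_mul h2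
    refine this.congr_deriv ?_
    ring
  have hHanti : Antitone H := by
    apply antitone_of_deriv_nonpos (fun x => (hHder x).differentiableAt)
    intro x
    rw [(hHder x).deriv]
    have := hineq x
    have : deriv (deriv ψ) x - a^2 * ψ x ≤ 0 := by linarith
    have he : 0 < Real.exp (a*x) := Real.exp_pos _
    nlinarith
  have hstep1 : ∀ x ≤ x₀, a * ψ x ≤ deriv ψ x := by
    intro x hx
    have h1 : H x₀ ≤ H x := hHanti hx
    have h2 : 0 ≤ H x₀ := by
      have := Real.exp_pos (a*x₀)
      simp only [hH]
      nlinarith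
    have he : 0 < Real.exp (a*x) := Real.exp_pos _
    simp only [hH] at h1 h2
    nlinarith
  -- second step
  set K : ℝ → ℝ := fun x => Real.exp (-(a*x)) * ψ x with hK
  have hKder : ∀ x, HasDerivAt K (Real.exp (-(a*x)) * (deriv ψ x - a * ψ x)) x := by
    intro x
    have h1 : HasDerivAt (fun y : ℝ => -(a*y)) (-a) x := by
      simpa using ((hasDerivAt_id x).const_mul a).fun_neg
    have h2 : HasDerivAt (fun y => Real.exp (-(a*y))) (Real.exp (-(a*x)) * (-a)) x :=
      by have h := (Real.hasDerivAt_exp (-(a*x))).comp x h1; exact h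
    have := h2.fun_mul ((hψd x).hasDerivAt)
    refine this.congr_deriv ?_
    ring
  have hKmono : MonotoneOn K (Iic x₀) := by
    apply monotoneOn_of_deriv_nonneg (convex_Iic x₀)
      (Continuous.continuousOn (continuous_iff_continuousAt.2 fun x => (hKder x).continuousAt))
      (fun x _ => (hKder x).differentiableAt.differentiableWithinAt)
    intro x hx
    rw [interior_Iic] at hx
    rw [(hKder x).deriv]
    have h1 := hstep1 x (le_of_lt hx)
    have he : 0 < Real.exp (-(a*x)) := Real.exp_pos _
    nlinarith
  intro x hx
  have h1 : K x ≤ K x₀ := hKmono hx (by simp) hx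
  simp only [hK] at h1
  have he1 : 0 < Real.exp (-(a*x)) := Real.exp_pos _
  have key : ψ x ≤ Real.exp (a*x) * (Real.exp (-(a*x₀)) * ψ x₀) := by
    rw [← mul_le_mul_iff_right₀ he1]
    calc Real.exp (-(a*x)) * ψ x ≤ Real.exp (-(a*x₀)) * ψ x₀ := h1
    _ = Real.exp (-(a*x)) * (Real.exp (a*x) * (Real.exp (-(a*x₀)) * ψ x₀)) := by
        rw [← mul_assoc, ← Real.exp_add]; simp
  calc ψ x ≤ Real.exp (a*x) * (Real.exp (-(a*x₀)) * ψ x₀) := key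
  _ = ψ x₀ * Real.exp (a * (x - x₀)) := by rw [← mul_assoc, ← Real.exp_add]; ring_nf

/-- Boundedness contradiction: `g` bounded cannot have exponentially growing derivative. -/
private lemma L2' {a c M x₀ : ℝ} {g : ℝ → ℝ} (ha : 0 < a) (hc : 0 < c)
    (hg : Differentiable ℝ g) (hM : ∀ x, |g x| ≤ M)
    (hgrow : ∀ x, x₀ ≤ x → c * Real.exp (2*a*(x - x₀)) ≤ deriv g x) : False := by
  set F : ℝ → ℝ := fun y => g y - c/(2*a) * Real.exp (2*a*(y - x₀)) with hF
  have hFder : ∀ y, HasDerivAt F (deriv g y - c * Real.exp (2*a*(y-x₀))) y := by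
    intro y
    have h1 : HasDerivAt (fun z : ℝ => 2*a*(z - x₀)) (2*a) y := by
      simpa using ((hasDerivAt_id y).sub_const x₀).const_mul (2*a)
    have h2 : HasDerivAt (fun z => Real.exp (2*a*(z-x₀))) (Real.exp (2*a*(y-x₀)) * (2*a)) y :=
      (Real.hasDerivAt_exp _).comp y h1
    have := ((hg y).hasDerivAt).fun_sub (h2.const_mul (c/(2*a)))
    refine this.congr_deriv ?_
    field_simp
  have hFmono : MonotoneOn F (Ici x₀) := by
    apply monotoneOn_of_deriv_nonneg (convex_Ici x₀)
      (Continuous.continuousOn (continuous_iff_continuousAt.2 fun y => (hFder y).continuousAt))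
      (fun y _ => (hFder y).differentiableAt.differentiableWithinAt)
    intro y hy
    rw [interior_Ici] at hy
    rw [(hFder y).deriv]
    have := hgrow y (le_of_lt hy)
    linarith
  have hM0 : 0 ≤ M := le_trans (abs_nonneg _) (hM x₀)
  obtain ⟨y, hy⟩ : ∃ y : ℝ, y = x₀ + (2*M+1)/c := ⟨_, rfl⟩
  have hd : 0 ≤ (2*M+1)/c := by positivity
  have hyx : x₀ ≤ y := by rw [hy]; linarith
  have h1 : F x₀ ≤ F y := hFmono (by simp) hyx hyx
  simp only [hF, sub_self, mul_zero, Real.exp_zero, mul_one] at h1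
  have hexp : 2*a*(y - x₀) + 1 ≤ Real.exp (2*a*(y-x₀)) := Real.add_one_le_exp _
  have hca : 0 < c/(2*a) := by positivity
  have hgy : g x₀ + c/(2*a) * (2*a*(y-x₀)) ≤ g y := by
    nlinarith [mul_le_mul_of_nonneg_left hexp hca.le]
  have h2 : y - x₀ = (2*M+1)/c := by rw [hy]; ring
  rw [h2] at hgy
  have h3 : c/(2*a) * (2*a*((2*M+1)/c)) = 2*M+1 := by field_simp
  rw [h3] at hgy
  have h4 := abs_le.mp (hM x₀)
  have h5 := abs_le.mp (hM y)
  linarith [h4.1, h5.2]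

/-- Riccati-type consequences: if `g` is bounded with `g′ > 0` and `ψ = (g′)^{-1/2}` satisfies
`−ψ″ + a²ψ ≥ 0`, then `|ψ′| < aψ`, the two-sided exponential bounds on `g′`, `|g″| ≤ 2a g′`,
`g′ ≤ 2a (sup g − g)`, `g′ ≤ 2a (g − inf g)`, and the `cosh⁻²` lower bound when `g′` is even. -/
theorem stmt18 (a : ℝ) (ha : 0 < a) (g : ℝ → ℝ) (hgbdd : ∃ M, ∀ x, |g x| ≤ M)
    (hgsmooth : ContDiff ℝ 3 g) (hg' : ∀ x, 0 < deriv g x)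
    (ψ : ℝ → ℝ) (hψ : ψ = fun x => (Real.sqrt (deriv g x))⁻¹)
    (hineq : ∀ x : ℝ, 0 ≤ -(deriv (deriv ψ) x) + a ^ 2 * ψ x) :
    (∀ x : ℝ, |deriv ψ x| < a * ψ x) ∧
    (∀ x x₀ : ℝ, deriv g x₀ * Real.exp (-(2 * a * |x - x₀|)) ≤ deriv g x ∧
      deriv g x ≤ deriv g x₀ * Real.exp (2 * a * |x - x₀|)) ∧
    (∀ x : ℝ, |deriv (deriv g) x| ≤ 2 * a * deriv g x) ∧
    (∀ x : ℝ, deriv g x ≤ 2 * a * (sSup (Set.range g) - g x) ∧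
      deriv g x ≤ 2 * a * (g x - sInf (Set.range g))) ∧
    ((∀ x : ℝ, deriv g (-x) = deriv g x) →
      ∀ x : ℝ, deriv g 0 / (Real.cosh (a * x)) ^ 2 ≤ deriv g x) := by
  obtain ⟨M, hM⟩ := hgbdd
  obtain ⟨hgdiff, -, hg'c2⟩ := contDiff_succ_iff_deriv.mp
    (show ContDiff ℝ (2+1) g from by norm_num; exact hgsmooth)
  obtain ⟨hg'diff, -, hg''c1⟩ := contDiff_succ_iff_deriv.mp
    (show ContDiff ℝ (1+1) (deriv g) from by norm_num; exact hg'c2)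
  have hψc2 : ContDiff ℝ 2 ψ := by
    rw [hψ]
    rw [contDiff_iff_contDiffAt]
    intro x
    have hsq : ContDiffAt ℝ 2 (fun x => Real.sqrt (deriv g x)) x :=
      (contDiffAt_sqrt (ne_of_gt (hg' x))).comp x (by exact_mod_cast hg'c2.contDiffAt)
    exact hsq.inv (ne_of_gt (Real.sqrt_pos.mpr (hg' x)))
  have hψpos : ∀ x, 0 < ψ x := by
    intro x; rw [hψ]
    exact inv_pos.mpr (Real.sqrt_pos.mpr (hg' x))
  have hψd : Differentiable ℝ ψ := hψc2.differentiable (by norm_num)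
  obtain ⟨-, -, hψ'c1⟩ := contDiff_succ_iff_deriv.mp
    (show ContDiff ℝ (1+1) ψ from by norm_num; exact hψc2)
  have hψd2 : Differentiable ℝ (deriv ψ) := hψ'c1.differentiable (by norm_num)
  have hgψ : ∀ x, deriv g x = (ψ x ^ 2)⁻¹ := by
    intro x
    rw [hψ]
    simp only [inv_pow, inv_inv]
    rw [Real.sq_sqrt (le_of_lt (hg' x))]
  have hψ'' : ∀ x, deriv (deriv ψ) x ≤ a^2 * ψ x := fun x => by linarith [hineq x]
  have hg''eq : ∀ x, deriv (deriv g) x = -2 * deriv ψ x / ψ x ^ 3 := by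
    intro x
    have hfun : deriv g = fun y => (ψ y ^ 2)⁻¹ := funext hgψ
    have hpow : HasDerivAt (fun y => ψ y ^ 2) (2 * ψ x ^ 1 * deriv ψ x) x := by
      simpa using ((hψd x).hasDerivAt).fun_pow 2
    have hne : ψ x ^ 2 ≠ 0 := pow_ne_zero 2 (hψpos x).ne'
    have hinv : HasDerivAt (fun y => (ψ y ^ 2)⁻¹)
        (-(2 * ψ x ^ 1 * deriv ψ x) / (ψ x ^ 2) ^ 2) x := hpow.inv hne
    rw [hfun, hinv.deriv]
    have h0 := (hψpos x).ne'
    field_simp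
  -- Part (i)
  have part1 : ∀ x, |deriv ψ x| < a * ψ x := by
    intro x₁
    by_contra hcon
    push_neg at hcon
    rcases le_abs.mp hcon with hc1 | hc2
    · -- forward: deriv ψ x₁ ≥ a ψ x₁, blow-up of g' at -∞
      have hdecay := L1' ha hψd hψd2 hψ'' hc1
      have hgrow : ∀ y, -x₁ ≤ y →
          deriv g x₁ * Real.exp (2*a*(y - (-x₁))) ≤ deriv (fun z => -g (-z)) y := by
        intro y hy
        have hb := hdecay (-y) (by linarith)
        have hder : deriv (fun z => -g (-z)) y = deriv g (-y) := by
          have h := deriv_comp_neg (fun w => -g w) y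
          simpa using h
        rw [hder, hgψ (-y), hgψ x₁]
        have h1 := inv_sq_bound' (hψpos (-y)) (hψpos x₁) (Real.exp_pos (a*(-y - x₁))) hb
        calc (ψ x₁ ^2)⁻¹ * Real.exp (2*a*(y - -x₁))
            = (ψ x₁ ^2)⁻¹ * ((Real.exp (a*(-y - x₁)))^2)⁻¹ := by
              rw [show 2*a*(y - -x₁) = -(2*(a*(-y - x₁))) by ring, exp_sq_inv']
          _ ≤ (ψ (-y) ^2)⁻¹ := h1
      exact L2' ha (hg' x₁) ((hgdiff.comp differentiable_neg).neg)
        (fun x => by simpa using hM (-x)) hgrow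
    · -- backward: deriv ψ x₁ ≤ -a ψ x₁, blow-up of g' at +∞
      have hrd : Differentiable ℝ (fun y => ψ (-y)) := hψd.comp differentiable_neg
      have hrdfun : deriv (fun y => ψ (-y)) = fun y => -(deriv ψ (-y)) :=
        funext (fun y => deriv_comp_neg ψ y)
      have hrd2 : Differentiable ℝ (deriv (fun y => ψ (-y))) := by
        rw [hrdfun]; exact (hψd2.comp differentiable_neg).neg
      have hr'' : ∀ y, deriv (deriv (fun y => ψ (-y))) y ≤ a^2 * ψ (-y) := by
        intro y
        rw [hrdfun]
        have h1 : deriv (fun y => -(deriv ψ (-y))) y = -(deriv (fun y => deriv ψ (-y)) y) := by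
          rw [deriv.fun_neg]
        rw [h1, deriv_comp_neg (deriv ψ) y, neg_neg]
        exact hψ'' (-y)
      have h0 : a * ψ (-(-x₁)) ≤ deriv (fun y => ψ (-y)) (-x₁) := by
        rw [hrdfun]
        simpa using hc2
      have hdecay := L1' ha hrd hrd2 hr'' h0
      have hgrow : ∀ x, x₁ ≤ x → deriv g x₁ * Real.exp (2*a*(x - x₁)) ≤ deriv g x := by
        intro x hx
        have hb := hdecay (-x) (by linarith)
        simp only [neg_neg] at hb
        have hb' : ψ x ≤ ψ x₁ * Real.exp (a * (x₁ - x)) := by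
          calc ψ x ≤ ψ x₁ * Real.exp (a * (-x - -x₁)) := hb
          _ = ψ x₁ * Real.exp (a * (x₁ - x)) := by ring_nf
        rw [hgψ x, hgψ x₁]
        have h1 := inv_sq_bound' (hψpos x) (hψpos x₁) (Real.exp_pos (a*(x₁ - x))) hb'
        calc (ψ x₁ ^2)⁻¹ * Real.exp (2*a*(x - x₁))
            = (ψ x₁ ^2)⁻¹ * ((Real.exp (a*(x₁ - x)))^2)⁻¹ := by
              rw [show 2*a*(x - x₁) = -(2*(a*(x₁ - x))) by ring, exp_sq_inv']
          _ ≤ (ψ x ^2)⁻¹ := h1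
      exact L2' ha (hg' x₁) hgdiff hM hgrow
  -- Part (iii)
  have part3 : ∀ x, |deriv (deriv g) x| ≤ 2 * a * deriv g x := by
    intro x
    rw [hg''eq x, hgψ x]
    have hp := hψpos x
    have h1 := (part1 x).le
    rw [abs_div, abs_of_pos (by positivity : (0:ℝ) < ψ x ^3)]
    rw [div_le_iff₀ (by positivity)]
    have h2 : |(-2 : ℝ) * deriv ψ x| = 2 * |deriv ψ x| := by
      rw [abs_mul]; norm_num
    rw [h2]
    have h3 : 2*a*(ψ x^2)⁻¹ * ψ x^3 = 2*a*ψ x := by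
      field_simp
    rw [h3]
    nlinarith [h1]
  -- Lipschitz bound for log ∘ g'
  have hlogLip : ∀ x x₀ : ℝ, |Real.log (deriv g x) - Real.log (deriv g x₀)| ≤ 2*a*|x - x₀| := by
    intro x x₀
    have hder : ∀ y, HasDerivAt (fun z => Real.log (deriv g z))
        (deriv (deriv g) y / deriv g y) y :=
      fun y => ((hg'diff y).hasDerivAt).log (hg' y).ne'
    have h := Convex.norm_image_sub_le_of_norm_deriv_le
      (f := fun z => Real.log (deriv g z)) (s := univ) (C := 2*a)
      (fun y _ => (hder y).differentiableAt)
      (fun y _ => by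
        rw [(hder y).deriv, Real.norm_eq_abs, abs_div, abs_of_pos (hg' y),
          div_le_iff₀ (hg' y)]
        exact part3 y)
      convex_univ (mem_univ x₀) (mem_univ x)
    simpa [Real.norm_eq_abs] using h
  -- Part (ii)
  have part2 : ∀ x x₀ : ℝ, deriv g x₀ * Real.exp (-(2 * a * |x - x₀|)) ≤ deriv g x ∧
      deriv g x ≤ deriv g x₀ * Real.exp (2 * a * |x - x₀|) := by
    intro x x₀
    have h := abs_le.mp (hlogLip x x₀)
    constructor
    · calc deriv g x₀ * Real.exp (-(2 * a * |x-x₀|))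
          = Real.exp (Real.log (deriv g x₀) + -(2*a*|x-x₀|)) := by
            rw [Real.exp_add, Real.exp_log (hg' x₀)]
      _ ≤ Real.exp (Real.log (deriv g x)) := Real.exp_le_exp.mpr (by linarith [h.1])
      _ = deriv g x := Real.exp_log (hg' x)
    · calc deriv g x = Real.exp (Real.log (deriv g x)) := (Real.exp_log (hg' x)).symm
      _ ≤ Real.exp (Real.log (deriv g x₀) + 2*a*|x-x₀|) :=
          Real.exp_le_exp.mpr (by linarith [h.2])
      _ = deriv g x₀ * Real.exp (2 * a * |x-x₀|) := by
          rw [Real.exp_add, Real.exp_log (hg' x₀)]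
  -- Part (iv)
  have hub : BddAbove (Set.range g) := ⟨M, by rintro _ ⟨x, rfl⟩; exact (abs_le.mp (hM x)).2⟩
  have hlbd : BddBelow (Set.range g) := ⟨-M, by rintro _ ⟨x, rfl⟩; exact (abs_le.mp (hM x)).1⟩
  have part4 : ∀ x : ℝ, deriv g x ≤ 2*a*(sSup (Set.range g) - g x) ∧
      deriv g x ≤ 2*a*(g x - sInf (Set.range g)) := by
    intro x
    have hcpos := hg' x
    constructor
    · have hFder : ∀ y, HasDerivAt (fun z => g z + deriv g x/(2*a) * Real.exp (-(2*a*(z - x))))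
          (deriv g y - deriv g x * Real.exp (-(2*a*(y - x)))) y := by
        intro y
        have h1 : HasDerivAt (fun z : ℝ => -(2*a*(z - x))) (-(2*a)) y := by
          simpa using (((hasDerivAt_id y).sub_const x).const_mul (2*a)).fun_neg
        have h2 := (Real.hasDerivAt_exp _).comp y h1
        have h3 := ((hgdiff y).hasDerivAt).fun_add (h2.const_mul (deriv g x/(2*a)))
        refine h3.congr_deriv ?_
        field_simp
        ring
      have hFmono : MonotoneOn (fun z => g z + deriv g x/(2*a) * Real.exp (-(2*a*(z - x))))
          (Ici x) := by
        apply monotoneOn_of_deriv_nonneg (convex_Ici x)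
          (Continuous.continuousOn (by fun_prop))
          (fun y _ => (hFder y).differentiableAt.differentiableWithinAt)
        intro y hy
        rw [interior_Ici] at hy
        rw [(hFder y).deriv]
        have h1 := (part2 y x).1
        rw [abs_of_nonneg (by have hyx : x < y := hy; linarith : (0:ℝ) ≤ y - x)] at h1
        linarith
      have hkey : ∀ y, x ≤ y →
          g x + deriv g x/(2*a) * (1 - Real.exp (-(2*a*(y-x)))) ≤ sSup (Set.range g) := by
        intro y hy
        have h1 := hFmono self_mem_Ici hy hy
        simp only [sub_self, mul_zero, neg_zero, Real.exp_zero, mul_one] at h1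
        have h2 : g y ≤ sSup (Set.range g) := le_csSup hub ⟨y, rfl⟩
        have hca : 0 < deriv g x/(2*a) := by positivity
        nlinarith [Real.exp_pos (-(2*a*(y-x)))]
      have t0 : Filter.Tendsto (fun y : ℝ => y - x) Filter.atTop Filter.atTop := by
        simpa [sub_eq_add_neg] using
          Filter.tendsto_atTop_add_const_right Filter.atTop (-x) Filter.tendsto_id
      have t1 : Filter.Tendsto (fun y : ℝ => 2*a*(y - x)) Filter.atTop Filter.atTop :=
        t0.const_mul_atTop (by positivity)
      have t2 : Filter.Tendsto (fun y : ℝ => -(2*a*(y - x))) Filter.atTop Filter.atBot :=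
        Filter.tendsto_neg_atTop_atBot.comp t1
      have hlim : Filter.Tendsto
          (fun y => g x + deriv g x/(2*a) * (1 - Real.exp (-(2*a*(y-x)))))
          Filter.atTop (nhds (g x + deriv g x/(2*a) * (1 - 0))) :=
        (((Real.tendsto_exp_atBot.comp t2).const_sub 1).const_mul _).const_add _
      have hfin := le_of_tendsto hlim (Filter.eventually_atTop.mpr ⟨x, hkey⟩)
      have h5 : deriv g x/(2*a) ≤ sSup (Set.range g) - g x := by linarith
      calc deriv g x = 2*a*(deriv g x/(2*a)) := by field_simp
      _ ≤ 2*a*(sSup (Set.range g) - g x) :=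
          mul_le_mul_of_nonneg_left h5 (by positivity)
    · have hGder : ∀ y, HasDerivAt (fun z => g z - deriv g x/(2*a) * Real.exp (2*a*(z - x)))
          (deriv g y - deriv g x * Real.exp (2*a*(y - x))) y := by
        intro y
        have h1 : HasDerivAt (fun z : ℝ => 2*a*(z - x)) (2*a) y := by
          simpa using ((hasDerivAt_id y).sub_const x).const_mul (2*a)
        have h2 := (Real.hasDerivAt_exp _).comp y h1
        have h3 := ((hgdiff y).hasDerivAt).fun_sub (h2.const_mul (deriv g x/(2*a)))
        refine h3.congr_deriv ?_
        field_simp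
      have hGmono : MonotoneOn (fun z => g z - deriv g x/(2*a) * Real.exp (2*a*(z - x)))
          (Iic x) := by
        apply monotoneOn_of_deriv_nonneg (convex_Iic x)
          (Continuous.continuousOn (by fun_prop))
          (fun y _ => (hGder y).differentiableAt.differentiableWithinAt)
        intro y hy
        rw [interior_Iic] at hy
        rw [(hGder y).deriv]
        have h1 := (part2 y x).1
        rw [abs_of_nonpos (by have hyx : y < x := hy; linarith : (y:ℝ) - x ≤ 0)] at h1
        have h2 : -(2*a*-(y-x)) = 2*a*(y-x) := by ring
        rw [h2] at h1
        linarith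
      have hkey : ∀ y, y ≤ x →
          sInf (Set.range g) ≤ g x - deriv g x/(2*a) * (1 - Real.exp (2*a*(y-x))) := by
        intro y hy
        have h1 := hGmono hy self_mem_Iic hy
        simp only [sub_self, mul_zero, Real.exp_zero, mul_one] at h1
        have h2 : sInf (Set.range g) ≤ g y := csInf_le hlbd ⟨y, rfl⟩
        have hca : 0 < deriv g x/(2*a) := by positivity
        nlinarith [Real.exp_pos (2*a*(y-x))]
      have t0 : Filter.Tendsto (fun y : ℝ => y - x) Filter.atBot Filter.atBot := by
        simpa [sub_eq_add_neg] using
          Filter.tendsto_atBot_add_const_right Filter.atBot (-x) Filter.tendsto_id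
      have t1 : Filter.Tendsto (fun y : ℝ => 2*a*(y - x)) Filter.atBot Filter.atBot :=
        t0.const_mul_atBot (by positivity)
      have hlim : Filter.Tendsto
          (fun y => g x - deriv g x/(2*a) * (1 - Real.exp (2*a*(y-x))))
          Filter.atBot (nhds (g x - deriv g x/(2*a) * (1 - 0))) :=
        Filter.Tendsto.const_sub _
          (((Real.tendsto_exp_atBot.comp t1).const_sub 1).const_mul _)
      have hfin := ge_of_tendsto hlim (Filter.eventually_atBot.mpr ⟨x, hkey⟩)
      have h5 : deriv g x/(2*a) ≤ g x - sInf (Set.range g) := by linarith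
      calc deriv g x = 2*a*(deriv g x/(2*a)) := by field_simp
      _ ≤ 2*a*(g x - sInf (Set.range g)) :=
          mul_le_mul_of_nonneg_left h5 (by positivity)
  refine ⟨part1, part2, part3, part4, ?_⟩
  -- Part (v)
  intro heven x
  have hψeven : ∀ y, ψ (-y) = ψ y := by
    intro y
    rw [hψ]
    simp only
    rw [heven y]
  have hψ'0 : deriv ψ 0 = 0 := by
    have h1 : (fun y => ψ (-y)) = ψ := funext hψeven
    have h2 := deriv_comp_neg ψ 0
    rw [h1, neg_zero] at h2
    linarith
  have hid : ∀ y : ℝ, HasDerivAt (fun z : ℝ => a*z) a y :=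
    fun y => by simpa using (hasDerivAt_id y).const_mul a
  have hcosh : ∀ y : ℝ, HasDerivAt (fun z => Real.cosh (a*z)) (Real.sinh (a*y) * a) y :=
    fun y => (Real.hasDerivAt_cosh (a*y)).comp y (hid y)
  have hsinh : ∀ y : ℝ, HasDerivAt (fun z => Real.sinh (a*z)) (Real.cosh (a*y) * a) y :=
    fun y => (Real.hasDerivAt_sinh (a*y)).comp y (hid y)
  have hexpd : ∀ y : ℝ, HasDerivAt (fun z => Real.exp (a*z)) (Real.exp (a*y) * a) y :=
    fun y => (Real.hasDerivAt_exp (a*y)).comp y (hid y)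
  have hexpn : ∀ y : ℝ, HasDerivAt (fun z => Real.exp (-(a*z))) (Real.exp (-(a*y)) * (-a)) y :=
    fun y => (Real.hasDerivAt_exp _).comp y (by simpa using (hid y).fun_neg)
  have hhder : ∀ y, HasDerivAt (fun z => Real.exp (a*z) *
      (deriv ψ z - ψ 0*(a*Real.sinh (a*z)) - a*(ψ z - ψ 0*Real.cosh (a*z))))
      (Real.exp (a*y) * (deriv (deriv ψ) y - a^2 * ψ y)) y := by
    intro y
    have p1 := (hψd2 y).hasDerivAt
    have p2 := ((hsinh y).const_mul a).const_mul (ψ 0)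
    have p3 := (((hψd y).hasDerivAt).fun_sub ((hcosh y).const_mul (ψ 0))).const_mul a
    have total := (hexpd y).fun_mul ((p1.fun_sub p2).fun_sub p3)
    refine total.congr_deriv ?_
    ring
  have hhanti : Antitone (fun z => Real.exp (a*z) *
      (deriv ψ z - ψ 0*(a*Real.sinh (a*z)) - a*(ψ z - ψ 0*Real.cosh (a*z)))) := by
    apply antitone_of_deriv_nonpos (fun y => (hhder y).differentiableAt)
    intro y
    rw [(hhder y).deriv]
    have h1 := hψ'' y
    nlinarith [Real.exp_pos (a*y)]
  have hstep : ∀ y, 0 ≤ y →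
      deriv ψ y - ψ 0*(a*Real.sinh (a*y)) - a*(ψ y - ψ 0*Real.cosh (a*y)) ≤ 0 := by
    intro y hy
    have h1 := hhanti hy
    simp only [mul_zero, Real.exp_zero, Real.sinh_zero, Real.cosh_zero, one_mul, mul_one,
      hψ'0] at h1
    have he := Real.exp_pos (a*y)
    nlinarith [h1]
  have hkder : ∀ y, HasDerivAt (fun z => Real.exp (-(a*z)) * (ψ z - ψ 0 * Real.cosh (a*z)))
      (Real.exp (-(a*y)) * ((deriv ψ y - ψ 0*(a*Real.sinh (a*y)))
        - a*(ψ y - ψ 0*Real.cosh (a*y)))) y := by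
    intro y
    have inner2 := ((hψd y).hasDerivAt).fun_sub ((hcosh y).const_mul (ψ 0))
    have total := (hexpn y).fun_mul inner2
    refine total.congr_deriv ?_
    ring
  have hkanti : AntitoneOn (fun z => Real.exp (-(a*z)) * (ψ z - ψ 0 * Real.cosh (a*z)))
      (Ici 0) := by
    apply antitoneOn_of_deriv_nonpos (convex_Ici 0)
      (Continuous.continuousOn (by fun_prop))
      (fun y _ => (hkder y).differentiableAt.differentiableWithinAt)
    intro y hy
    rw [interior_Ici] at hy
    rw [(hkder y).deriv]
    have h1 := hstep y (le_of_lt hy)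
    nlinarith [Real.exp_pos (-(a*y))]
  have hcoshb0 : ∀ y, 0 ≤ y → ψ y ≤ ψ 0 * Real.cosh (a*y) := by
    intro y hy
    have h1 := hkanti self_mem_Ici hy hy
    simp only [mul_zero, neg_zero, Real.exp_zero, Real.cosh_zero, mul_one, one_mul,
      sub_self] at h1
    have he := Real.exp_pos (-(a*y))
    nlinarith
  have hcoshb : ∀ y, ψ y ≤ ψ 0 * Real.cosh (a*y) := by
    intro y
    rcases le_or_gt 0 y with hy | hy
    · exact hcoshb0 y hy
    · have h1 := hcoshb0 (-y) (by linarith)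
      rw [hψeven y] at h1
      rwa [show a * -y = -(a*y) by ring, Real.cosh_neg] at h1
  have hcp : 0 < Real.cosh (a*x) := Real.cosh_pos (a*x)
  have h1 := inv_sq_bound' (hψpos x) (hψpos 0) hcp (hcoshb x)
  calc deriv g 0 / Real.cosh (a*x)^2
      = (ψ 0^2)⁻¹ * ((Real.cosh (a*x))^2)⁻¹ := by rw [hgψ 0, div_eq_mul_inv]
    _ ≤ (ψ x^2)⁻¹ := h1
    _ = deriv g x := (hgψ x).symm

end
end
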